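/- Let Σ be a finite alphabet, L ⊆ Σ* a regular language, and M a minimal complete DFA recognizing L with finitely many states. Suppose that (1) M contains no nontrivial cycle, i.e., there are no two distinct states p ≠ q and words u, v ∈ Σ* with δ(p,u) = q and δ(q,v) = p, and (2) there are no three pairwise distinct states p, q, q' of M and words w, w' ∈ (Σ(q) ∩ Σ(q'))* with δ(p,w) = q and δ(p,w') = q'. Then L is piecewise testable. -/

import Mathlib

/-- A language over `α` is piecewise testable if it is a finite Boolean combination
(unions, intersections, complements) of "piece" languages
`Σ* a₁ Σ* a₂ Σ* ⋯ Σ* aₖ Σ* = {w | a₁⋯aₖ is a subsequence of w}`. -/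
inductive PiecewiseTestable {α : Type*} : Set (List α) → Prop where
  | piece (l : List α) : PiecewiseTestable {w | l.Sublist w}
  | compl {L : Set (List α)} : PiecewiseTestable L → PiecewiseTestable Lᶜ
  | union {K L : Set (List α)} :
      PiecewiseTestable K → PiecewiseTestable L → PiecewiseTestable (K ∪ L)
  | inter {K L : Set (List α)} :
      PiecewiseTestable K → PiecewiseTestable L → PiecewiseTestable (K ∩ L)

namespace PTAux

open List

variable {α : Type*} {σ : Type*}

/-! ### Pure list lemmas -/

/-- The alternating word `(b a)^t`. -/
def pw (b a : α) : ℕ → List α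
  | 0 => []
  | t+1 => b :: a :: pw b a t

lemma pw_length (b a : α) (t : ℕ) : (pw b a t).length = 2 * t := by
  induction t with
  | zero => rfl
  | succ t ih => simp [pw, ih]; omega

lemma pw_add (b a : α) (s t : ℕ) : pw b a (s + t) = pw b a s ++ pw b a t := by
  induction s with
  | zero => simp [pw]
  | succ s ih => rw [Nat.succ_add]; simp only [pw, ih]; rfl

lemma mem_pw {b a c : α} {t : ℕ} (h : c ∈ pw b a t) : c = b ∨ c = a := by
  induction t with
  | zero => simp [pw] at h
  | succ t ih =>
    simp only [pw, mem_cons] at h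
    rcases h with h | h | h
    · exact Or.inl h
    · exact Or.inr h
    · exact ih h

lemma b_mem_pw (b a : α) {t : ℕ} (ht : t ≠ 0) : b ∈ pw b a t := by
  obtain ⟨t, rfl⟩ := Nat.exists_eq_succ_of_ne_zero ht
  simp [pw]

lemma a_mem_pw (b a : α) {t : ℕ} (ht : t ≠ 0) : a ∈ pw b a t := by
  obtain ⟨t, rfl⟩ := Nat.exists_eq_succ_of_ne_zero ht
  simp [pw]

lemma sub_after {c : α} {t P Q : List α} (hc : c ∉ P) (h : (c :: t).Sublist (P ++ Q)) :
    (c :: t).Sublist Q := by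
  induction P with
  | nil => simpa using h
  | cons p P ih =>
    cases h with
    | cons _ h' => exact ih (fun hm => hc (mem_cons_of_mem _ hm)) h'
    | cons_cons _ h' => exact absurd mem_cons_self hc

lemma cons_sublist_of_ne {a b : α} {t y' : List α} (hab : a ≠ b)
    (h : (a :: t).Sublist (b :: y')) : (a :: t).Sublist y' := by
  cases h with
  | cons _ h' => exact h'
  | cons_cons _ h' => exact absurd rfl hab

/-! ### Piece equivalence -/

/-- Two words have the same pieces (subsequences) of length ≤ k. -/
def Eqv (k : ℕ) (x y : List α) : Prop :=
  ∀ s : List α, s.length ≤ k → (s.Sublist x ↔ s.Sublist y)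

lemma Eqv.symm {k : ℕ} {x y : List α} (h : Eqv k x y) : Eqv k y x :=
  fun s hs => (h s hs).symm

lemma Eqv.mono {k k' : ℕ} {x y : List α} (h : Eqv k x y) (hk : k' ≤ k) : Eqv k' x y :=
  fun s hs => h s (hs.trans hk)

section Strip

variable {k : ℕ} {x y x₀ x' y₀ y' : List α} {a b : α}

lemma same_strip (hE : Eqv k x y) (hx : x = x₀ ++ a :: x') (hy : y = y₀ ++ a :: y')
    (hay : a ∉ y₀) : ∀ s : List α, s.length + 1 ≤ k → s.Sublist x' → s.Sublist y' := by
  intro s hs h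
  have h1 : (a :: s).Sublist x := by
    rw [hx]
    exact (cons_sublist_cons.mpr h).trans (sublist_append_right x₀ (a :: x'))
  have h2 : (a :: s).Sublist y := (hE (a :: s) (by simpa using hs)).mp h1
  have h3 : (a :: s).Sublist (a :: y') := sub_after hay (hy ▸ h2)
  exact cons_sublist_cons.mp h3

lemma cross_strip (hE : Eqv k x y) (hx : x = x₀ ++ a :: x') (hy : y = y₀ ++ b :: y')
    (hay : a ∉ y₀) (hab : a ≠ b) :
    ∀ s : List α, s.length + 1 ≤ k → s.Sublist x' → s.Sublist y' := by
  intro s hs h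
  have h1 : (a :: s).Sublist x := by
    rw [hx]
    exact (cons_sublist_cons.mpr h).trans (sublist_append_right x₀ (a :: x'))
  have h2 : (a :: s).Sublist y := (hE (a :: s) (by simpa using hs)).mp h1
  have h3 : (a :: s).Sublist (b :: y') := sub_after hay (hy ▸ h2)
  have h4 : (a :: s).Sublist y' := cons_sublist_of_ne hab h3
  exact (sublist_cons_self a s).trans h4

lemma pp1 (hE : Eqv k x y) (hx : x = x₀ ++ a :: x') (hy : y = y₀ ++ b :: y')
    (hay : a ∉ y₀) (hbx : b ∉ x₀) (hab : a ≠ b) :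
    ∀ t : ℕ, ∀ s : List α, s.Sublist x' → 2 * t + s.length + 2 ≤ k →
      (pw b a t ++ s).Sublist x' := by
  intro t
  induction t with
  | zero => intro s hs _; simpa [pw] using hs
  | succ t ih =>
    intro s hs hlen
    have hτ : (pw b a t ++ s).Sublist x' := ih s hs (by omega)
    have hτlen : (pw b a t ++ s).length = 2 * t + s.length := by
      simp [pw_length]
    have h1 : (a :: (pw b a t ++ s)).Sublist x := by
      rw [hx]
      exact (cons_sublist_cons.mpr hτ).trans (sublist_append_right x₀ (a :: x'))
    have h2 : (a :: (pw b a t ++ s)).Sublist y :=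
      (hE _ (by simp [hτlen]; omega)).mp h1
    have h3 : (a :: (pw b a t ++ s)).Sublist (b :: y') := sub_after hay (hy ▸ h2)
    have h4 : (a :: (pw b a t ++ s)).Sublist y' := cons_sublist_of_ne hab h3
    have h5 : (b :: a :: (pw b a t ++ s)).Sublist y := by
      rw [hy]
      exact (cons_sublist_cons.mpr h4).trans (sublist_append_right y₀ (b :: y'))
    have h6 : (b :: a :: (pw b a t ++ s)).Sublist x :=
      (hE _ (by simp [hτlen]; omega)).mpr h5
    have h7 : (b :: a :: (pw b a t ++ s)).Sublist (a :: x') := sub_after hbx (hx ▸ h6)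
    have h8 : (b :: a :: (pw b a t ++ s)).Sublist x' :=
      cons_sublist_of_ne (Ne.symm hab) h7
    simpa [pw] using h8

lemma eqv_pw (hE : Eqv k x y) (hx : x = x₀ ++ a :: x') (hy : y = y₀ ++ b :: y')
    (hay : a ∉ y₀) (hbx : b ∉ x₀) (hab : a ≠ b) (t : ℕ) {m : ℕ}
    (hm : m + (2 * t + 2) ≤ k) : Eqv m x' (pw b a t ++ x') := by
  intro s hs
  constructor
  · intro h; exact h.trans (sublist_append_right _ _)
  · intro h
    obtain ⟨ξ, s', rfl, hξ, hs'⟩ := sublist_append_iff.mp h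
    have h1 : (ξ ++ s').Sublist (pw b a t ++ s') := hξ.append (Sublist.refl s')
    refine h1.trans (pp1 hE hx hy hay hbx hab t s' hs' ?_)
    have : s'.length ≤ m := by
      have := hs; simp [length_append] at this; omega
    omega

end Strip

/-! ### Automaton lemmas -/

variable [Fintype σ] (M : DFA α σ)

def Reach (p q : σ) : Prop := ∃ w : List α, M.evalFrom p w = q

lemma evalFrom_append' (s : σ) (x y : List α) :
    M.evalFrom s (x ++ y) = M.evalFrom (M.evalFrom s x) y := by
  simp [DFA.evalFrom, List.foldl_append]

lemma evalFrom_cons' (s : σ) (a : α) (x : List α) :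
    M.evalFrom s (a :: x) = M.evalFrom (M.step s a) x := rfl

lemma reach_refl (p : σ) : Reach M p p := ⟨[], rfl⟩

lemma reach_trans {p q r : σ} (h1 : Reach M p q) (h2 : Reach M q r) : Reach M p r := by
  obtain ⟨u, hu⟩ := h1
  obtain ⟨v, hv⟩ := h2
  exact ⟨u ++ v, by rw [evalFrom_append', hu, hv]⟩

section WithHyp

variable (hnc : ¬ ∃ (p q : σ) (u v : List α),
    p ≠ q ∧ M.evalFrom p u = q ∧ M.evalFrom q v = p)

include hnc in
lemma reach_antisymm {p q : σ} (h1 : Reach M p q) (h2 : Reach M q p) : p = q := by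
  by_contra hne
  obtain ⟨u, hu⟩ := h1
  obtain ⟨v, hv⟩ := h2
  exact hnc ⟨p, q, u, v, hne, hu, hv⟩

/-- The number of states reachable from `p`. -/
noncomputable def mu (p : σ) : ℕ := {q | Reach M p q}.ncard

include hnc in
lemma mu_lt {p q : σ} (h : Reach M p q) (hne : p ≠ q) : mu M q < mu M p := by
  apply Set.ncard_lt_ncard _ (Set.toFinite _)
  rw [Set.ssubset_def]
  constructor
  · intro r hr; exact reach_trans M h hr
  · intro hsub
    have hp : p ∈ {r | Reach M q r} := hsub (reach_refl M p)
    exact hne (reach_antisymm M hnc h hp)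

lemma eval_loops {p : σ} {w : List α} (h : ∀ c ∈ w, M.step p c = p) :
    M.evalFrom p w = p := by
  induction w with
  | nil => rfl
  | cons c w ih =>
    rw [evalFrom_cons', h c mem_cons_self]
    exact ih (fun d hd => h d (mem_cons_of_mem _ hd))

include hnc in
lemma loop_letters {p : σ} {w : List α} (h : M.evalFrom p w = p) :
    ∀ c ∈ w, M.step p c = p := by
  induction w with
  | nil => intro c hc; simp at hc
  | cons d w ih =>
    have h1 : Reach M (M.step p d) p := ⟨w, h⟩
    have h2 : Reach M p (M.step p d) := ⟨[d], rfl⟩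
    have hdp : M.step p d = p := reach_antisymm M hnc h1 h2
    intro c hc
    rcases mem_cons.mp hc with rfl | hc
    · exact hdp
    · exact ih (by rwa [evalFrom_cons', hdp] at h) c hc

lemma first_jump {p : σ} {x : List α} (h : ¬ ∀ c ∈ x, M.step p c = p) :
    ∃ (x₀ : List α) (a : α) (x' : List α),
      x = x₀ ++ a :: x' ∧ (∀ c ∈ x₀, M.step p c = p) ∧ M.step p a ≠ p := by
  induction x with
  | nil => exact absurd (by simp) h
  | cons c x ih =>
    by_cases hc : M.step p c = p
    · have : ¬ ∀ d ∈ x, M.step p d = p := by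
        intro hall
        exact h (by
          intro d hd
          rcases mem_cons.mp hd with rfl | hd
          · exact hc
          · exact hall d hd)
      obtain ⟨x₀, a, x', hxd, h0, ha⟩ := ih this
      exact ⟨c :: x₀, a, x', by rw [hxd]; rfl, by
        intro d hd
        rcases mem_cons.mp hd with rfl | hd
        · exact hc
        · exact h0 d hd, ha⟩
    · exact ⟨[], c, x, rfl, by simp, hc⟩

lemma eval_decomp {p : σ} {x₀ : List α} (h0 : ∀ c ∈ x₀, M.step p c = p)
    (a : α) (x' : List α) :
    M.evalFrom p (x₀ ++ a :: x') = M.evalFrom (M.step p a) x' := by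
  rw [evalFrom_append', eval_loops M h0, evalFrom_cons']

include hnc in
lemma pow_absorb (s : σ) (b a : α) :
    M.step (M.evalFrom s (pw b a (Fintype.card σ))) a
        = M.evalFrom s (pw b a (Fintype.card σ)) ∧
    M.step (M.evalFrom s (pw b a (Fintype.card σ))) b
        = M.evalFrom s (pw b a (Fintype.card σ)) := by
  set n := Fintype.card σ with hn
  have key : ∀ i j : ℕ, i < j → j ≤ n →
      M.evalFrom s (pw b a i) = M.evalFrom s (pw b a j) →
      (M.step (M.evalFrom s (pw b a n)) a = M.evalFrom s (pw b a n) ∧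
       M.step (M.evalFrom s (pw b a n)) b = M.evalFrom s (pw b a n)) := by
    intro i j hij hjn hfeq
    set q := M.evalFrom s (pw b a i) with hq
    have hji : i + (j - i) = j := by omega
    have hloop : M.evalFrom q (pw b a (j - i)) = q := by
      rw [hq, ← evalFrom_append', ← pw_add, hji, ← hfeq]
    have hlet : ∀ c ∈ pw b a (j - i), M.step q c = q := loop_letters M hnc hloop
    have hqa : M.step q a = q := hlet a (a_mem_pw b a (by omega))
    have hqb : M.step q b = q := hlet b (b_mem_pw b a (by omega))
    have habs : ∀ c ∈ pw b a (n - i), M.step q c = q := by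
      intro c hc
      rcases mem_pw hc with rfl | rfl
      · exact hqb
      · exact hqa
    have hin : i + (n - i) = n := by omega
    have : M.evalFrom s (pw b a n) = q := by
      rw [← hin, pw_add, evalFrom_append', ← hq, eval_loops M habs]
    rw [this]
    exact ⟨hqa, hqb⟩
  have hcard : Fintype.card σ < Fintype.card (Fin (n + 1)) := by simp [hn]
  obtain ⟨i, j, hne, hfeq⟩ :=
    Fintype.exists_ne_map_eq_of_card_lt
      (fun i : Fin (n + 1) => M.evalFrom s (pw b a i.val)) hcard
  rcases lt_or_gt_of_ne (fun h : i.val = j.val => hne (Fin.ext h)) with h | h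
  · exact key i.val j.val h (by omega) hfeq
  · exact key j.val i.val h (by omega) hfeq.symm

variable (hnp : ¬ ∃ (p q q' : σ) (w w' : List α),
    p ≠ q ∧ p ≠ q' ∧ q ≠ q' ∧
    (∀ a ∈ w, M.step q a = q ∧ M.step q' a = q') ∧
    (∀ a ∈ w', M.step q a = q ∧ M.step q' a = q') ∧
    M.evalFrom p w = q ∧ M.evalFrom p w' = q')

include hnp in
lemma top_unique {p q q' : σ} {a b : α} {w w' : List α}
    (hw : M.evalFrom p w = q) (hw' : M.evalFrom p w' = q')
    (hwm : ∀ c ∈ w, c = a ∨ c = b) (hw'm : ∀ c ∈ w', c = a ∨ c = b)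
    (hqa : M.step q a = q) (hqb : M.step q b = q)
    (hq'a : M.step q' a = q') (hq'b : M.step q' b = q')
    (hpq : p ≠ q) (hpq' : p ≠ q') : q = q' := by
  by_contra hne
  refine hnp ⟨p, q, q', w, w', hpq, hpq', hne, ?_, ?_, hw, hw'⟩
  · intro c hc
    rcases hwm c hc with rfl | rfl
    · exact ⟨hqa, hq'a⟩
    · exact ⟨hqb, hq'b⟩
  · intro c hc
    rcases hw'm c hc with rfl | rfl
    · exact ⟨hqa, hq'a⟩
    · exact ⟨hqb, hq'b⟩

include hnc hnp in
/-- The main lemma: piece-equivalent words lead to the same state. -/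
lemma main : ∀ d : ℕ, ∀ p : σ, ∀ x y : List α, mu M p ≤ d →
    Eqv ((2 * Fintype.card σ + 2) * (d + 1)) x y →
    M.evalFrom p x = M.evalFrom p y := by
  set n := Fintype.card σ with hn
  intro d
  induction d with
  | zero =>
    intro p x y hmu _
    exfalso
    have : 0 < mu M p := by
      rw [mu]
      rw [Set.ncard_pos (Set.toFinite _)]
      exact ⟨p, reach_refl M p⟩
    omega
  | succ d ih =>
    intro p x y hmu hE
    have hbudget : (2 * n + 2) * (d + 1) + (2 * n + 2) = (2 * n + 2) * (d + 1 + 1) := by ring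
    have hpos : 0 < (2 * n + 2) * (d + 1 + 1) := Nat.mul_pos (by omega) (by omega)
    by_cases hx : ∀ c ∈ x, M.step p c = p
    · by_cases hy : ∀ c ∈ y, M.step p c = p
      · rw [eval_loops M hx, eval_loops M hy]
      · exfalso
        obtain ⟨y₀, b, y', hyd, hy0, hpb⟩ := first_jump M hy
        have hbmem : b ∈ y := by rw [hyd]; simp
        have h1 : [b].Sublist y := singleton_sublist.mpr hbmem
        have h2 : [b].Sublist x := (hE [b] (by simp only [List.length_singleton]; omega)).mpr h1
        exact hpb (hx b (singleton_sublist.mp h2))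
    · by_cases hy : ∀ c ∈ y, M.step p c = p
      · exfalso
        obtain ⟨x₀, a, x', hxd, hx0, hpa⟩ := first_jump M hx
        have hamem : a ∈ x := by rw [hxd]; simp
        have h1 : [a].Sublist x := singleton_sublist.mpr hamem
        have h2 : [a].Sublist y := (hE [a] (by simp only [List.length_singleton]; omega)).mp h1
        exact hpa (hy a (singleton_sublist.mp h2))
      · obtain ⟨x₀, a, x', hxd, hx0, hpa⟩ := first_jump M hx
        obtain ⟨y₀, b, y', hyd, hy0, hpb⟩ := first_jump M hy
        have hax0 : a ∉ x₀ := fun h => hpa (hx0 a h)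
        have hay0 : a ∉ y₀ := fun h => hpa (hy0 a h)
        have hbx0 : b ∉ x₀ := fun h => hpb (hx0 b h)
        have hby0 : b ∉ y₀ := fun h => hpb (hy0 b h)
        have hmua : mu M (M.step p a) ≤ d := by
          have := mu_lt M hnc (⟨[a], rfl⟩ : Reach M p (M.step p a)) (Ne.symm hpa)
          omega
        have hmub : mu M (M.step p b) ≤ d := by
          have := mu_lt M hnc (⟨[b], rfl⟩ : Reach M p (M.step p b)) (Ne.symm hpb)
          omega
        rw [hxd, hyd, eval_decomp M hx0, eval_decomp M hy0]
        by_cases hab : a = b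
        · subst hab
          refine ih (M.step p a) x' y' hmua ?_
          intro s hs
          constructor
          · exact same_strip hE hxd hyd hay0 s (by omega)
          · exact same_strip hE.symm hyd hxd hax0 s (by omega)
        · -- the two first jump letters differ
          obtain ⟨hq1a, hq1b⟩ := pow_absorb M hnc (M.step p a) b a
          obtain ⟨hq2b, hq2a⟩ := pow_absorb M hnc (M.step p b) a b
          set q₁ := M.evalFrom (M.step p a) (pw b a n) with hq1def
          set q₂ := M.evalFrom (M.step p b) (pw a b n) with hq2def
          have hpq1 : p ≠ q₁ := fun h => hpa (by rw [h]; exact hq1a)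
          have hpq2 : p ≠ q₂ := fun h => hpa (by rw [h]; exact hq2a)
          have hreach1 : M.evalFrom p (a :: pw b a n) = q₁ := by
            rw [evalFrom_cons', hq1def]
          have hreach2 : M.evalFrom p (b :: pw a b n) = q₂ := by
            rw [evalFrom_cons', hq2def]
          have hq12 : q₁ = q₂ := by
            refine top_unique M hnp hreach1 hreach2 ?_ ?_ hq1a hq1b hq2a hq2b hpq1 hpq2
            · intro c hc
              rcases mem_cons.mp hc with rfl | hc
              · exact Or.inl rfl
              · rcases mem_pw hc with rfl | rfl
                · exact Or.inr rfl
                · exact Or.inl rfl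
            · intro c hc
              rcases mem_cons.mp hc with rfl | hc
              · exact Or.inr rfl
              · rcases mem_pw hc with rfl | rfl
                · exact Or.inl rfl
                · exact Or.inr rfl
          have hmuq : mu M q₁ ≤ d := by
            have := mu_lt M hnc ⟨a :: pw b a n, hreach1⟩ hpq1
            omega
          have e1 : M.evalFrom (M.step p a) x' = M.evalFrom (M.step p a) (pw b a n ++ x') := by
            refine ih (M.step p a) x' (pw b a n ++ x') hmua ?_
            exact eqv_pw hE hxd hyd hay0 hbx0 hab n (by omega)
          have e2 : M.evalFrom (M.step p a) (pw b a n ++ x') = M.evalFrom q₁ x' := by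
            rw [evalFrom_append', hq1def]
          have e3 : M.evalFrom q₁ x' = M.evalFrom q₁ y' := by
            refine ih q₁ x' y' hmuq ?_
            intro s hs
            constructor
            · exact cross_strip hE hxd hyd hay0 hab s (by omega)
            · exact cross_strip hE.symm hyd hxd hbx0 (Ne.symm hab) s (by omega)
          have e4 : M.evalFrom (M.step p b) y' = M.evalFrom (M.step p b) (pw a b n ++ y') := by
            refine ih (M.step p b) y' (pw a b n ++ y') hmub ?_
            exact eqv_pw hE.symm hyd hxd hbx0 hay0 (Ne.symm hab) n (by omega)
          have e5 : M.evalFrom (M.step p b) (pw a b n ++ y') = M.evalFrom q₂ y' := by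
            rw [evalFrom_append', hq2def]
          rw [e1, e2, e3, hq12, ← e5, ← e4]

end WithHyp

/-! ### Finitely many short words -/

section Lists

variable [Fintype α]

open Classical in
noncomputable def listsLen : ℕ → Finset (List α)
  | 0 => {([] : List α)}
  | m+1 => Finset.univ.biUnion (fun c : α => (listsLen m).image (c :: ·))

open Classical in
lemma mem_listsLen (m : ℕ) (l : List α) : l ∈ listsLen m ↔ l.length = m := by
  induction m generalizing l with
  | zero =>
    simp [listsLen, List.length_eq_zero_iff]
  | succ m ih =>
    cases l with
    | nil => simp [listsLen]
    | cons c l =>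
      simp only [listsLen, Finset.mem_biUnion, Finset.mem_univ, Finset.mem_image, true_and,
        ih, List.length_cons]
      constructor
      · rintro ⟨d, l', hl', h⟩
        obtain ⟨rfl, rfl⟩ : d = c ∧ l' = l := by
          exact ⟨(List.cons.injEq ..▸ h).1, (List.cons.injEq ..▸ h).2⟩
        omega
      · intro h
        exact ⟨c, l, by omega, rfl⟩

open Classical in
noncomputable def shortWords (K : ℕ) : Finset (List α) :=
  (Finset.range (K + 1)).biUnion listsLen

lemma mem_shortWords (K : ℕ) (l : List α) : l ∈ shortWords K ↔ l.length ≤ K := by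
  classical
  simp [shortWords, mem_listsLen]

end Lists

/-! ### Building piecewise testable sets -/

lemma pt_univ : PiecewiseTestable (Set.univ : Set (List α)) := by
  have : (Set.univ : Set (List α)) = {w | ([] : List α).Sublist w} := by
    ext w; simp
  rw [this]
  exact .piece []

lemma pt_empty : PiecewiseTestable (∅ : Set (List α)) := by
  have : (∅ : Set (List α)) = (Set.univ : Set (List α))ᶜ := by simp
  rw [this]
  exact .compl pt_univ

lemma pt_biInter {β : Type*} (F : Finset β) (f : β → Set (List α))
    (h : ∀ b ∈ F, PiecewiseTestable (f b)) : PiecewiseTestable (⋂ b ∈ F, f b) := by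
  classical
  induction F using Finset.induction with
  | empty => simpa using pt_univ
  | @insert a F ha ih =>
    rw [Finset.set_biInter_insert]
    exact .inter (h a (Finset.mem_insert_self _ _))
      (ih (fun b hb => h b (Finset.mem_insert_of_mem hb)))

lemma pt_biUnion {β : Type*} (F : Finset β) (f : β → Set (List α))
    (h : ∀ b ∈ F, PiecewiseTestable (f b)) : PiecewiseTestable (⋃ b ∈ F, f b) := by
  classical
  induction F using Finset.induction with
  | empty => simpa using pt_empty
  | @insert a F ha ih =>
    rw [Finset.set_biUnion_insert]
    exact .union (h a (Finset.mem_insert_self _ _))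
      (ih (fun b hb => h b (Finset.mem_insert_of_mem hb)))

end PTAux

open PTAux in
/-- If a minimal complete DFA has no nontrivial cycle and no three pairwise distinct
states `p, q, q'` with words `w, w'` over `Σ(q) ∩ Σ(q')` such that `δ(p,w) = q` and
`δ(p,w') = q'`, then its language is piecewise testable. -/
theorem stmt2 {α σ : Type*} [Fintype α] [Fintype σ] (M : DFA α σ)
    (hreach : ∀ q : σ, ∃ w : List α, M.evalFrom M.start w = q)
    (hdist : ∀ p q : σ, p ≠ q → ∃ z : List α,
      ¬ (M.evalFrom p z ∈ M.accept ↔ M.evalFrom q z ∈ M.accept))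
    (hnocycle : ¬ ∃ (p q : σ) (u v : List α),
      p ≠ q ∧ M.evalFrom p u = q ∧ M.evalFrom q v = p)
    (hnopair : ¬ ∃ (p q q' : σ) (w w' : List α),
      p ≠ q ∧ p ≠ q' ∧ q ≠ q' ∧
      (∀ a ∈ w, M.step q a = q ∧ M.step q' a = q') ∧
      (∀ a ∈ w', M.step q a = q ∧ M.step q' a = q') ∧
      M.evalFrom p w = q ∧ M.evalFrom p w' = q') :
    PiecewiseTestable (M.accepts : Set (List α)) := by
  classical
  set n := Fintype.card σ with hn
  set K := (2 * n + 2) * (n + 1) with hK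
  -- piece-equivalent words are both in or both out of the language
  have hml : ∀ u v : List α, Eqv K u v → (u ∈ M.accepts ↔ v ∈ M.accepts) := by
    intro u v h
    have hmu : mu M M.start ≤ n := by
      rw [mu]
      calc {q | Reach M M.start q}.ncard ≤ (Set.univ : Set σ).ncard :=
            Set.ncard_le_ncard (Set.subset_univ _) (Set.toFinite _)
        _ = n := by rw [Set.ncard_univ, Nat.card_eq_fintype_card]
    have heval : M.evalFrom M.start u = M.evalFrom M.start v :=
      main M hnocycle hnopair n M.start u v hmu h
    constructor
    · intro hu
      have : M.evalFrom M.start u ∈ M.accept := hu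
      exact (heval ▸ this : M.evalFrom M.start v ∈ M.accept)
    · intro hv
      have : M.evalFrom M.start v ∈ M.accept := hv
      exact (heval ▸ this : M.evalFrom M.start u ∈ M.accept)
  set T : Finset (List α) := shortWords K with hT
  -- the class of a piece-set S
  set cls : Finset (List α) → Set (List α) :=
    fun S => {w : List α | ∀ s ∈ T, (s.Sublist w ↔ s ∈ S)} with hcls
  have key : (M.accepts : Set (List α)) =
      ⋃ S ∈ (T.powerset.filter (fun S => cls S ⊆ (M.accepts : Set (List α)))), cls S := by
    ext w
    constructor
    · intro hw
      have hSw : (T.filter (fun s => s.Sublist w)) ∈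
          T.powerset.filter (fun S => cls S ⊆ (M.accepts : Set (List α))) := by
        rw [Finset.mem_filter]
        constructor
        · exact Finset.mem_powerset.mpr (Finset.filter_subset _ _)
        · intro v hv
          have hEqv : Eqv K v w := by
            intro s hs
            have hsT : s ∈ T := (mem_shortWords K s).mpr hs
            have h1 : s.Sublist v ↔ s ∈ T.filter (fun s => s.Sublist w) := hv s hsT
            have h2 : s ∈ T.filter (fun s => s.Sublist w) ↔ s.Sublist w := by
              simp [Finset.mem_filter, hsT]
            exact h1.trans h2
          exact (hml v w hEqv).mpr hw
      refine Set.mem_biUnion hSw ?_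
      intro s hsT
      simp [Finset.mem_filter, hsT]
    · intro hw
      change w ∈ (⋃ S ∈ (T.powerset.filter (fun S => cls S ⊆ (M.accepts : Set (List α)))), cls S : Set (List α)) at hw
      rw [Set.mem_iUnion₂] at hw
      obtain ⟨S, hS, hwS⟩ := hw
      exact (Finset.mem_filter.mp hS).2 hwS
  rw [key]
  apply pt_biUnion
  intro S _
  have hclseq : cls S =
      ⋂ s ∈ T, (if s ∈ S then {w : List α | s.Sublist w} else {w : List α | s.Sublist w}ᶜ) := by
    ext w
    simp only [hcls, Set.mem_setOf_eq, Set.mem_iInter]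
    constructor
    · intro h s hsT
      by_cases hsS : s ∈ S
      · simp [hsS]; exact (h s hsT).mpr hsS
      · simp [hsS]; intro hsub; exact hsS ((h s hsT).mp hsub)
    · intro h s hsT
      have := h s hsT
      by_cases hsS : s ∈ S
      · simp [hsS] at this; simp [hsS, this]
      · simp [hsS] at this; simp [hsS, this]
  rw [hclseq]
  apply pt_biInter
  intro s _
  by_cases hsS : s ∈ S
  · simp only [hsS, if_true]
    exact .piece s
  · simp only [hsS, if_false]
    exact .compl (.piece s)
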